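/- Let p₁ = [0:1], p₂ = [1:1], p₃ = [2:1], p₄ = [3:1], p₅ = [6:1] in ℙ¹(ℚ), and let Γ_P be the subgroup of PGL₂(ℚ) generated by all elements g such that for some pairwise distinct indices i, j, k, l ∈ {1,…,5} one has g(p_i) = p_j, g(p_j) = p_i, g(p_k) = p_l, and g(p_l) = p_k. Then for every natural number n, the class in PGL₂(ℚ) of the matrix with rows (1, 3⁻ⁿ),(0,1) — i.e., the Möbius transformation z ↦ z + 3⁻ⁿ — belongs to Γ_P. -/

import Mathlib

open Matrix

noncomputable section

/-- The projective line `ℙ¹(K)` over a field `K`, as the projectivization of `K²`. -/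
abbrev P1 (K : Type*) [Field K] : Type _ := Projectivization K (Fin 2 → K)

/-- `PGL₂(K)`: the quotient of `GL₂(K)` by its center. -/
abbrev PGL2 (K : Type*) [Field K] : Type _ :=
  GL (Fin 2) K ⧸ Subgroup.center (GL (Fin 2) K)

namespace PGL2

variable {K : Type*} [Field K]

/-- The linear automorphism of `K²` attached to an element of `GL₂(K)`. -/
def glEquiv (g : GL (Fin 2) K) : (Fin 2 → K) ≃ₗ[K] (Fin 2 → K) :=
  (Matrix.GeneralLinearGroup.toLin g).toLinearEquiv

lemma glEquiv_apply (g : GL (Fin 2) K) (v : Fin 2 → K) :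
    glEquiv g v = (g : Matrix (Fin 2) (Fin 2) K).mulVec v := rfl

/-- `GL₂(K)` acts on `ℙ¹(K)` by Möbius transformations. -/
instance : SMul (GL (Fin 2) K) (P1 K) :=
  ⟨fun g => Projectivization.map (glEquiv g).toLinearMap (glEquiv g).injective⟩

lemma gl_smul_mk (g : GL (Fin 2) K) (v : Fin 2 → K) (hv : v ≠ 0) :
    g • Projectivization.mk K v hv
      = Projectivization.mk K ((g : Matrix (Fin 2) (Fin 2) K).mulVec v)
          (fun h => hv ((glEquiv g).injective (by rw [map_zero]; exact h))) :=
  Projectivization.map_mk (glEquiv g).toLinearMap (glEquiv g).injective v hv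

instance : MulAction (GL (Fin 2) K) (P1 K) where
  one_smul x := by
    induction x using Projectivization.ind with
    | h v hv => rw [gl_smul_mk]; simp
  mul_smul g h x := by
    induction x using Projectivization.ind with
    | h v hv => rw [gl_smul_mk, gl_smul_mk, gl_smul_mk]; congr 1; simp only [Units.val_mul, Matrix.mulVec_mulVec]

lemma exists_scalar_of_mem_center (g : GL (Fin 2) K)
    (hg : g ∈ Subgroup.center (GL (Fin 2) K)) :
    ∃ a : K, (g : Matrix (Fin 2) (Fin 2) K) = a • (1 : Matrix (Fin 2) (Fin 2) K) := by
  have hmem := Subgroup.mem_center_iff.mp hg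
  set A : Matrix (Fin 2) (Fin 2) K := (g : Matrix (Fin 2) (Fin 2) K) with hA
  have hUdet : ((!![1, 1; 0, 1] : Matrix (Fin 2) (Fin 2) K)).det ≠ 0 := by
    norm_num [Matrix.det_fin_two_of]
  have hLdet : ((!![1, 0; 1, 1] : Matrix (Fin 2) (Fin 2) K)).det ≠ 0 := by
    norm_num [Matrix.det_fin_two_of]
  have hU := congrArg Units.val (hmem (Matrix.GeneralLinearGroup.mkOfDetNeZero _ hUdet))
  have hL := congrArg Units.val (hmem (Matrix.GeneralLinearGroup.mkOfDetNeZero _ hLdet))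
  have hU' : (!![1, 1; 0, 1] : Matrix (Fin 2) (Fin 2) K) * A = A * !![1, 1; 0, 1] := hU
  have hL' : (!![1, 0; 1, 1] : Matrix (Fin 2) (Fin 2) K) * A = A * !![1, 0; 1, 1] := hL
  have e1 := congrFun (congrFun hU' 0) 0
  have e2 := congrFun (congrFun hU' 0) 1
  have e3 := congrFun (congrFun hL' 0) 0
  simp [Matrix.mul_apply, Fin.sum_univ_two] at e1 e2 e3
  refine ⟨A 0 0, ?_⟩
  ext i j
  fin_cases i <;> fin_cases j <;>
    simp [Matrix.one_apply] <;> first | exact e3 | exact e1 | linear_combination e2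



lemma center_smul_eq (g : GL (Fin 2) K) (hg : g ∈ Subgroup.center (GL (Fin 2) K))
    (x : P1 K) : g • x = x := by
  obtain ⟨a, hA⟩ := exists_scalar_of_mem_center g hg
  have ha : a ≠ 0 := by
    intro h
    subst h
    have : IsUnit (g : Matrix (Fin 2) (Fin 2) K).det := ⟨Matrix.GeneralLinearGroup.det g, rfl⟩
    rw [hA] at this
    simp at this
  induction x using Projectivization.ind with
  | h v hv =>
    rw [gl_smul_mk]
    rw [Projectivization.mk_eq_mk_iff]
    exact ⟨Units.mk0 a ha, by ext i; fin_cases i <;> simp [hA, Matrix.mulVec, dotProduct, Fin.sum_univ_two, Matrix.one_apply]⟩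

/-- `PGL₂(K)` acts on `ℙ¹(K)` by Möbius transformations. -/
def toPerm : PGL2 K →* Equiv.Perm (P1 K) :=
  QuotientGroup.lift _ (MulAction.toPermHom (GL (Fin 2) K) (P1 K))
    (fun g hg => Equiv.ext fun x => center_smul_eq g hg x)

instance : SMul (PGL2 K) (P1 K) := ⟨fun g x => toPerm g x⟩

lemma smul_def (g : PGL2 K) (x : P1 K) : g • x = toPerm g x := rfl

instance : MulAction (PGL2 K) (P1 K) where
  one_smul x := by simp [smul_def]
  mul_smul g h x := by simp [smul_def]

/-- The class in `PGL₂(K)` of a matrix with nonzero determinant. -/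
def cls (M : Matrix (Fin 2) (Fin 2) K) (h : M.det ≠ 0) : PGL2 K :=
  QuotientGroup.mk (Matrix.GeneralLinearGroup.mkOfDetNeZero M h)

lemma cls_smul_mk (M : Matrix (Fin 2) (Fin 2) K) (h : M.det ≠ 0) (v : Fin 2 → K)
    (hv : v ≠ 0) (hMv : M.mulVec v ≠ 0) :
    cls M h • Projectivization.mk K v hv = Projectivization.mk K (M.mulVec v) hMv := by
  rw [smul_def, cls]
  show (Matrix.GeneralLinearGroup.mkOfDetNeZero M h) • Projectivization.mk K v hv = _
  rw [gl_smul_mk]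
  rfl

lemma vec_ne_zero (a : K) : ![a, (1 : K)] ≠ 0 := fun h => by simpa using congrFun h 1

/-- The affine point `[z : 1]` of `ℙ¹(K)`. -/
def affPt (z : K) : P1 K := Projectivization.mk K ![z, 1] (vec_ne_zero z)

/-- The point `[a : b]` of `ℙ¹(K)`. -/
def pt (a b : K) (h : ![a, b] ≠ 0) : P1 K := Projectivization.mk K ![a, b] h

end PGL2


open PGL2

/-- The configuration `P = (0, 1, 2, 3, 6)` in `ℙ¹(ℚ)`. -/
noncomputable def pconf : Fin 5 → P1 ℚ :=
  ![affPt 0, affPt 1, affPt 2, affPt 3, affPt 6]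

/-- `Γ_P`: the subgroup of `PGL₂(ℚ)` generated by the involutions exchanging two
disjoint pairs of points of the configuration `P`. -/
noncomputable def GammaP : Subgroup (PGL2 ℚ) :=
  Subgroup.closure {g : PGL2 ℚ | ∃ i j k l : Fin 5,
    i ≠ j ∧ i ≠ k ∧ i ≠ l ∧ j ≠ k ∧ j ≠ l ∧ k ≠ l ∧
    g • pconf i = pconf j ∧ g • pconf j = pconf i ∧
    g • pconf k = pconf l ∧ g • pconf l = pconf k}

-- auxiliary lemmas to insert before the theorem
namespace PGL2Aux
open PGL2

lemma cls_mul (M N : Matrix (Fin 2) (Fin 2) ℚ) (hM : M.det ≠ 0) (hN : N.det ≠ 0) :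
    cls M hM * cls N hN = cls (M * N) (by rw [Matrix.det_mul]; exact mul_ne_zero hM hN) := by
  unfold cls
  rw [← QuotientGroup.mk_mul]
  congr 1
  exact Units.ext rfl

lemma cls_congr (M N : Matrix (Fin 2) (Fin 2) ℚ) (hM : M.det ≠ 0) (hN : N.det ≠ 0)
    (e : M = N) : cls M hM = cls N hN := by subst e; rfl

lemma cls_one (h : (1 : Matrix (Fin 2) (Fin 2) ℚ).det ≠ 0) : cls 1 h = 1 := by
  unfold cls
  rw [← QuotientGroup.mk_one]
  congr 1
  exact Units.ext rfl

lemma scalar_mem_center (a : ℚ) (h : ((a • 1 : Matrix (Fin 2) (Fin 2) ℚ)).det ≠ 0) :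
    Matrix.GeneralLinearGroup.mkOfDetNeZero _ h ∈ Subgroup.center (GL (Fin 2) ℚ) := by
  rw [Subgroup.mem_center_iff]
  intro g
  apply Units.ext
  show (g : Matrix (Fin 2) (Fin 2) ℚ) * (a • 1) = (a • 1) * (g : Matrix (Fin 2) (Fin 2) ℚ)
  simp [Matrix.mul_smul, Matrix.smul_mul]

lemma cls_smul_eq (a : ℚ) (ha : a ≠ 0) (M : Matrix (Fin 2) (Fin 2) ℚ)
    (hM : M.det ≠ 0) (haM : (a • M).det ≠ 0) : cls (a • M) haM = cls M hM := by
  have hdet : ((a • 1 : Matrix (Fin 2) (Fin 2) ℚ)).det ≠ 0 := by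
    rw [Matrix.det_smul, Matrix.det_one, mul_one]
    exact pow_ne_zero _ ha
  have key : Matrix.GeneralLinearGroup.mkOfDetNeZero (a • M) haM
      = Matrix.GeneralLinearGroup.mkOfDetNeZero _ hdet
        * Matrix.GeneralLinearGroup.mkOfDetNeZero M hM := by
    apply Units.ext
    show a • M = (a • 1) * M
    rw [Matrix.smul_mul, one_mul]
  unfold cls
  rw [key, QuotientGroup.mk_mul,
    (QuotientGroup.eq_one_iff _).mpr (scalar_mem_center a hdet), one_mul]

lemma cls_smul_affPt (a b c d z w u : ℚ) (h : (!![a, b; c, d]).det ≠ 0)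
    (hu : u ≠ 0) (h0 : a * z + b = u * w) (h1 : c * z + d = u) :
    cls !![a, b; c, d] h • affPt z = affPt w := by
  have hv : (!![a, b; c, d]).mulVec ![z, 1] = u • ![w, 1] := by
    funext i
    fin_cases i <;>
      simp [Matrix.mulVec, dotProduct, Fin.sum_univ_two] <;>
      [exact h0; exact h1]
  have hMv : (!![a, b; c, d]).mulVec ![z, 1] ≠ 0 := by
    rw [hv]
    intro hh
    exact hu (by simpa using congrFun hh 1)
  rw [affPt, cls_smul_mk _ h _ _ hMv, affPt, Projectivization.mk_eq_mk_iff]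
  exact ⟨Units.mk0 u hu, by rw [hv]; rfl⟩

end PGL2Aux

open PGL2Aux

section Gens

lemma g1_mem : cls !![(3:ℚ), -3; 2, -3] (by norm_num [Matrix.det_fin_two_of]) ∈ GammaP := by
  apply Subgroup.subset_closure
  refine ⟨0, 1, 2, 3, by decide, by decide, by decide, by decide, by decide, by decide,
    ?_, ?_, ?_, ?_⟩
  · exact cls_smul_affPt 3 (-3) 2 (-3) 0 1 (-3) _ (by norm_num) (by norm_num) (by norm_num)
  · exact cls_smul_affPt 3 (-3) 2 (-3) 1 0 (-1) _ (by norm_num) (by norm_num) (by norm_num)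
  · exact cls_smul_affPt 3 (-3) 2 (-3) 2 3 1 _ (by norm_num) (by norm_num) (by norm_num)
  · exact cls_smul_affPt 3 (-3) 2 (-3) 3 2 3 _ (by norm_num) (by norm_num) (by norm_num)

lemma g2_mem : cls !![(18:ℚ), -36; 7, -18] (by norm_num [Matrix.det_fin_two_of]) ∈ GammaP := by
  apply Subgroup.subset_closure
  refine ⟨0, 2, 3, 4, by decide, by decide, by decide, by decide, by decide, by decide,
    ?_, ?_, ?_, ?_⟩
  · exact cls_smul_affPt 18 (-36) 7 (-18) 0 2 (-18) _ (by norm_num) (by norm_num) (by norm_num)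
  · exact cls_smul_affPt 18 (-36) 7 (-18) 2 0 (-4) _ (by norm_num) (by norm_num) (by norm_num)
  · exact cls_smul_affPt 18 (-36) 7 (-18) 3 6 3 _ (by norm_num) (by norm_num) (by norm_num)
  · exact cls_smul_affPt 18 (-36) 7 (-18) 6 3 24 _ (by norm_num) (by norm_num) (by norm_num)

lemma g3_mem : cls !![(6:ℚ), -12; 5, -6] (by norm_num [Matrix.det_fin_two_of]) ∈ GammaP := by
  apply Subgroup.subset_closure
  refine ⟨0, 2, 1, 4, by decide, by decide, by decide, by decide, by decide, by decide,
    ?_, ?_, ?_, ?_⟩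
  · exact cls_smul_affPt 6 (-12) 5 (-6) 0 2 (-6) _ (by norm_num) (by norm_num) (by norm_num)
  · exact cls_smul_affPt 6 (-12) 5 (-6) 2 0 4 _ (by norm_num) (by norm_num) (by norm_num)
  · exact cls_smul_affPt 6 (-12) 5 (-6) 1 6 (-1) _ (by norm_num) (by norm_num) (by norm_num)
  · exact cls_smul_affPt 6 (-12) 5 (-6) 6 1 24 _ (by norm_num) (by norm_num) (by norm_num)

lemma h1_mem : cls !![(9:ℚ), -9; 4, -9] (by norm_num [Matrix.det_fin_two_of]) ∈ GammaP := by
  apply Subgroup.subset_closure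
  refine ⟨0, 1, 3, 4, by decide, by decide, by decide, by decide, by decide, by decide,
    ?_, ?_, ?_, ?_⟩
  · exact cls_smul_affPt 9 (-9) 4 (-9) 0 1 (-9) _ (by norm_num) (by norm_num) (by norm_num)
  · exact cls_smul_affPt 9 (-9) 4 (-9) 1 0 (-5) _ (by norm_num) (by norm_num) (by norm_num)
  · exact cls_smul_affPt 9 (-9) 4 (-9) 3 6 3 _ (by norm_num) (by norm_num) (by norm_num)
  · exact cls_smul_affPt 9 (-9) 4 (-9) 6 3 15 _ (by norm_num) (by norm_num) (by norm_num)

lemma h2_mem : cls !![(9:ℚ), -24; 4, -9] (by norm_num [Matrix.det_fin_two_of]) ∈ GammaP := by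
  apply Subgroup.subset_closure
  refine ⟨1, 3, 2, 4, by decide, by decide, by decide, by decide, by decide, by decide,
    ?_, ?_, ?_, ?_⟩
  · exact cls_smul_affPt 9 (-24) 4 (-9) 1 3 (-5) _ (by norm_num) (by norm_num) (by norm_num)
  · exact cls_smul_affPt 9 (-24) 4 (-9) 3 1 3 _ (by norm_num) (by norm_num) (by norm_num)
  · exact cls_smul_affPt 9 (-24) 4 (-9) 2 6 (-1) _ (by norm_num) (by norm_num) (by norm_num)
  · exact cls_smul_affPt 9 (-24) 4 (-9) 6 2 15 _ (by norm_num) (by norm_num) (by norm_num)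

lemma h3_mem : cls !![(1:ℚ), -3; 0, -1] (by norm_num [Matrix.det_fin_two_of]) ∈ GammaP := by
  apply Subgroup.subset_closure
  refine ⟨0, 3, 1, 2, by decide, by decide, by decide, by decide, by decide, by decide,
    ?_, ?_, ?_, ?_⟩
  · exact cls_smul_affPt 1 (-3) 0 (-1) 0 3 (-1) _ (by norm_num) (by norm_num) (by norm_num)
  · exact cls_smul_affPt 1 (-3) 0 (-1) 3 0 (-1) _ (by norm_num) (by norm_num) (by norm_num)
  · exact cls_smul_affPt 1 (-3) 0 (-1) 1 2 (-1) _ (by norm_num) (by norm_num) (by norm_num)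
  · exact cls_smul_affPt 1 (-3) 0 (-1) 2 1 (-1) _ (by norm_num) (by norm_num) (by norm_num)

lemma T_mem : cls !![(1:ℚ), 1; 0, 1] (by norm_num [Matrix.det_fin_two_of]) ∈ GammaP := by
  have e : cls !![(3:ℚ), -3; 2, -3] (by norm_num [Matrix.det_fin_two_of])
      * cls !![(18:ℚ), -36; 7, -18] (by norm_num [Matrix.det_fin_two_of])
      * cls !![(6:ℚ), -12; 5, -6] (by norm_num [Matrix.det_fin_two_of])
      = cls !![(1:ℚ), 1; 0, 1] (by norm_num [Matrix.det_fin_two_of]) := by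
    rw [cls_mul, cls_mul]
    have e1 : (!![(3:ℚ), -3; 2, -3] * !![(18:ℚ), -36; 7, -18] * !![(6:ℚ), -12; 5, -6])
        = (-72 : ℚ) • !![(1:ℚ), 1; 0, 1] := by
      ext i j
      fin_cases i <;> fin_cases j <;>
        norm_num [Matrix.mul_apply, Fin.sum_univ_two]
    rw [cls_congr _ _ _ (by norm_num [Matrix.det_smul, Matrix.det_fin_two_of]) e1,
      cls_smul_eq (-72) (by norm_num) _ (by norm_num [Matrix.det_fin_two_of])]
  rw [← e]
  exact mul_mem (mul_mem g1_mem g2_mem) g3_mem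

lemma S_mem : cls !![(3:ℚ), 0; 0, 1] (by norm_num [Matrix.det_fin_two_of]) ∈ GammaP := by
  have e : cls !![(9:ℚ), -9; 4, -9] (by norm_num [Matrix.det_fin_two_of])
      * cls !![(9:ℚ), -24; 4, -9] (by norm_num [Matrix.det_fin_two_of])
      * cls !![(1:ℚ), -3; 0, -1] (by norm_num [Matrix.det_fin_two_of])
      = cls !![(3:ℚ), 0; 0, 1] (by norm_num [Matrix.det_fin_two_of]) := by
    rw [cls_mul, cls_mul]
    have e1 : (!![(9:ℚ), -9; 4, -9] * !![(9:ℚ), -24; 4, -9] * !![(1:ℚ), -3; 0, -1])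
        = (15 : ℚ) • !![(3:ℚ), 0; 0, 1] := by
      ext i j
      fin_cases i <;> fin_cases j <;>
        norm_num [Matrix.mul_apply, Fin.sum_univ_two]
    rw [cls_congr _ _ _ (by norm_num [Matrix.det_smul, Matrix.det_fin_two_of]) e1,
      cls_smul_eq 15 (by norm_num) _ (by norm_num [Matrix.det_fin_two_of])]
  rw [← e]
  exact mul_mem (mul_mem h1_mem h2_mem) h3_mem

lemma Sn_det (n : ℕ) : (!![(3:ℚ)^n, 0; 0, 1]).det ≠ 0 := by
  norm_num [Matrix.det_fin_two_of]

lemma Sn_det' (n : ℕ) : (!![(1:ℚ), 0; 0, (3:ℚ)^n]).det ≠ 0 := by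
  norm_num [Matrix.det_fin_two_of]

lemma S_pow (n : ℕ) :
    cls !![(3:ℚ), 0; 0, 1] (by norm_num [Matrix.det_fin_two_of]) ^ n
      = cls !![(3:ℚ)^n, 0; 0, 1] (Sn_det n) := by
  induction n with
  | zero =>
    rw [pow_zero]
    rw [cls_congr _ 1 (Sn_det 0) (by norm_num) (by
      rw [Matrix.one_fin_two]; norm_num), cls_one]
  | succ n ih =>
    rw [pow_succ, ih, cls_mul]
    apply cls_congr
    ext i j
    fin_cases i <;> fin_cases j <;>
      norm_num [Matrix.mul_apply, Fin.sum_univ_two, pow_succ]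

lemma Sn_inv (n : ℕ) :
    (cls !![(3:ℚ)^n, 0; 0, 1] (Sn_det n))⁻¹ = cls !![(1:ℚ), 0; 0, (3:ℚ)^n] (Sn_det' n) := by
  symm
  apply eq_inv_of_mul_eq_one_left
  rw [cls_mul]
  have e1 : (!![(1:ℚ), 0; 0, (3:ℚ)^n] * !![(3:ℚ)^n, 0; 0, 1])
      = ((3:ℚ)^n) • (1 : Matrix (Fin 2) (Fin 2) ℚ) := by
    ext i j
    fin_cases i <;> fin_cases j <;>
      norm_num [Matrix.mul_apply, Fin.sum_univ_two, Matrix.one_apply]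
  rw [cls_congr _ _ _ (by rw [Matrix.det_smul, Matrix.det_one, mul_one]; positivity) e1,
    cls_smul_eq ((3:ℚ)^n) (by positivity) _ (by rw [Matrix.det_one]; norm_num), cls_one]

end Gens

/-- For every natural number `n`, the Möbius transformation `z ↦ z + 3⁻ⁿ`
belongs to `Γ_P`. -/
theorem translation_by_three_pow_neg_mem_GammaP (n : ℕ) :
    cls !![(1 : ℚ), (3 : ℚ) ^ (-(n : ℤ)); 0, 1] (by norm_num [Matrix.det_fin_two_of])
      ∈ GammaP := by
  have hT := T_mem
  have hSn : cls !![(3:ℚ)^n, 0; 0, 1] (Sn_det n) ∈ GammaP := by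
    rw [← S_pow n]; exact pow_mem S_mem n
  have hSni : cls !![(1:ℚ), 0; 0, (3:ℚ)^n] (Sn_det' n) ∈ GammaP := by
    rw [← Sn_inv n]; exact inv_mem hSn
  have key : cls !![(1:ℚ), 0; 0, (3:ℚ)^n] (Sn_det' n)
      * cls !![(1:ℚ), 1; 0, 1] (by norm_num [Matrix.det_fin_two_of])
      * cls !![(3:ℚ)^n, 0; 0, 1] (Sn_det n)
      = cls !![(1 : ℚ), (3 : ℚ) ^ (-(n : ℤ)); 0, 1] (by norm_num [Matrix.det_fin_two_of]) := by
    rw [cls_mul, cls_mul]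
    have hpow : (3 : ℚ) ^ (-(n : ℤ)) = ((3:ℚ)^n)⁻¹ := by
      rw [_root_.zpow_neg, zpow_natCast]
    have e1 : (!![(1:ℚ), 0; 0, (3:ℚ)^n] * !![(1:ℚ), 1; 0, 1] * !![(3:ℚ)^n, 0; 0, 1])
        = ((3:ℚ)^n) • !![(1 : ℚ), (3 : ℚ) ^ (-(n : ℤ)); 0, 1] := by
      have h3 : (3:ℚ)^n ≠ 0 := by positivity
      ext i j
      fin_cases i <;> fin_cases j <;>
        simp [Matrix.mul_apply, Fin.sum_univ_two, hpow]
    rw [cls_congr _ _ _ (by norm_num [Matrix.det_smul, Matrix.det_fin_two_of]) e1,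
      cls_smul_eq ((3:ℚ)^n) (by positivity) _ (by norm_num [Matrix.det_fin_two_of])]
  rw [← key]
  exact mul_mem (mul_mem hSni hT) hSn
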